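/- Any binary self-dual code C of length n with minimum weight d > 2 is, up to permutation equivalence, obtained from some binary self-dual code C₀ of length n−2 by the building-up construction: there exists an odd-weight vector x ∈ GF(2)^{n−2} and a generator matrix with rows r₁,…,r_{(n−2)/2} of C₀ such that C is generated by (1,0,x) and the vectors (yᵢ, yᵢ, rᵢ) where yᵢ = x·rᵢ. -/

import Mathlib

open Finset

/-- Hamming weight of a binary vector. -/
def wt {n : ℕ} (v : Fin n → ZMod 2) : ℕ := (Finset.univ.filter (fun i => v i ≠ 0)).card

/-- Standard inner product over GF(2). -/
def inn {n : ℕ} (u v : Fin n → ZMod 2) : ZMod 2 := ∑ i, u i * v i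

/-- A code is self-dual if it equals its dual. -/
def IsSelfDual {n : ℕ} (C : Submodule (ZMod 2) (Fin n → ZMod 2)) : Prop :=
  ∀ v, v ∈ C ↔ ∀ c ∈ C, inn v c = 0

/-- `C` has minimum distance (weight) `d`. -/
def HasMinDist {n : ℕ} (C : Submodule (ZMod 2) (Fin n → ZMod 2)) (d : ℕ) : Prop :=
  (∃ c ∈ C, c ≠ 0 ∧ wt c = d) ∧ ∀ c ∈ C, c ≠ 0 → d ≤ wt c

/-- The shadow `S = C₀^⊥ \ C`, where `C₀` is the doubly-even subcode of `C`. -/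
def shadow {n : ℕ} (C : Submodule (ZMod 2) (Fin n → ZMod 2)) : Set (Fin n → ZMod 2) :=
  {v | ∀ c ∈ C, wt c % 4 = 0 → inn v c = 0} \ (C : Set (Fin n → ZMod 2))

/-- Covering radius of a code. -/
noncomputable def coveringRadius {n : ℕ} (C : Submodule (ZMod 2) (Fin n → ZMod 2)) : ℕ :=
  sInf {R | ∀ v : Fin n → ZMod 2, ∃ c ∈ C, wt (v - c) ≤ R}

/-- Prepend two coordinates to a vector. -/
def vcons2 {k : ℕ} (a b : ZMod 2) (v : Fin k → ZMod 2) : Fin (k + 2) → ZMod 2 :=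
  Fin.cons a (Fin.cons b v)

namespace BU

lemma char2_eq {a b : ZMod 2} (h : a + b = 0) : a = b := by revert a b; decide

lemma add_self (a : ZMod 2) : a + a = 0 := by revert a; decide

lemma zmod2_cases (a : ZMod 2) : a = 0 ∨ a = 1 := by revert a; decide

lemma inn_comm {n} (u v : Fin n → ZMod 2) : inn u v = inn v u := by
  unfold inn; exact Finset.sum_congr rfl fun i _ => mul_comm _ _

lemma inn_add_right {n} (x u v : Fin n → ZMod 2) : inn x (u + v) = inn x u + inn x v := by
  simp [inn, mul_add, Finset.sum_add_distrib]

lemma inn_add_left {n} (x u v : Fin n → ZMod 2) : inn (u + v) x = inn u x + inn v x := by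
  simp [inn, add_mul, Finset.sum_add_distrib]

lemma inn_smul_right {n} (s : ZMod 2) (x v : Fin n → ZMod 2) : inn x (s • v) = s * inn x v := by
  simp only [inn, Finset.mul_sum, Pi.smul_apply, smul_eq_mul]
  exact Finset.sum_congr rfl fun i _ => by ring

lemma inn_smul_left {n} (s : ZMod 2) (x v : Fin n → ZMod 2) : inn (s • v) x = s * inn v x := by
  simp only [inn, Finset.mul_sum, Pi.smul_apply, smul_eq_mul]
  exact Finset.sum_congr rfl fun i _ => by ring

lemma inn_zero_right {n} (x : Fin n → ZMod 2) : inn x 0 = 0 := by simp [inn]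

lemma inn_single {n} (i : Fin n) (v : Fin n → ZMod 2) : inn (Pi.single i 1) v = v i := by
  simp [inn, Pi.single_apply]

lemma wt_eq_sum {n} (v : Fin n → ZMod 2) : wt v = ∑ i, if v i ≠ 0 then 1 else 0 :=
  Finset.card_filter _ _

lemma cast_wt {n} (v : Fin n → ZMod 2) : (wt v : ZMod 2) = ∑ i, v i := by
  rw [wt_eq_sum, Nat.cast_sum]
  refine Finset.sum_congr rfl fun i _ => ?_
  rcases zmod2_cases (v i) with h | h <;> simp [h]

lemma inn_self {n} (v : Fin n → ZMod 2) : inn v v = (wt v : ZMod 2) := by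
  rw [cast_wt]
  exact Finset.sum_congr rfl fun i _ => by rcases zmod2_cases (v i) with h | h <;> simp [h]

lemma wt_comp {n} (v : Fin n → ZMod 2) (σ : Equiv.Perm (Fin n)) : wt (v ∘ σ) = wt v := by
  rw [wt_eq_sum, wt_eq_sum]
  exact Equiv.sum_comp σ (fun i => if v i ≠ 0 then 1 else 0)

lemma inn_comp {n} (u v : Fin n → ZMod 2) (σ : Equiv.Perm (Fin n)) :
    inn (u ∘ σ) (v ∘ σ) = inn u v :=
  Equiv.sum_comp σ (fun i => u i * v i)

lemma vcons2_add {k} (a b a' b' : ZMod 2) (v v' : Fin k → ZMod 2) :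
    vcons2 a b v + vcons2 a' b' v' = vcons2 (a + a') (b + b') (v + v') := by
  funext i
  refine Fin.cases ?_ (fun j => ?_) i
  · simp [vcons2]
  · refine Fin.cases ?_ (fun l => ?_) j <;> simp [vcons2]

lemma vcons2_zero {k} : (vcons2 0 0 0 : Fin (k+2) → ZMod 2) = 0 := by
  funext i
  refine Fin.cases ?_ (fun j => ?_) i
  · simp [vcons2]
  · refine Fin.cases ?_ (fun l => ?_) j <;> simp [vcons2]

lemma vcons2_eta {k} (c : Fin (k+2) → ZMod 2) :
    vcons2 (c 0) (c 1) (fun i => c i.succ.succ) = c := by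
  funext i
  refine Fin.cases ?_ (fun j => ?_) i
  · simp [vcons2]
  · refine Fin.cases ?_ (fun l => ?_) j
    · simp [vcons2, Fin.succ_zero_eq_one]
    · simp [vcons2]

lemma inn_vcons2 {k} (a b c d : ZMod 2) (u v : Fin k → ZMod 2) :
    inn (vcons2 a b u) (vcons2 c d v) = a * c + (b * d + inn u v) := by
  simp [inn, vcons2, Fin.sum_univ_succ]

lemma wt_vcons2 {k} (a b : ZMod 2) (v : Fin k → ZMod 2) :
    wt (vcons2 a b v) = (if a ≠ 0 then 1 else 0) + ((if b ≠ 0 then 1 else 0) + wt v) := by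
  rw [wt_eq_sum, wt_eq_sum]
  simp [vcons2, Fin.sum_univ_succ]

/-- The standard bilinear form. -/
noncomputable def B (k : ℕ) : LinearMap.BilinForm (ZMod 2) (Fin k → ZMod 2) :=
  LinearMap.mk₂ (ZMod 2) inn (fun u v w => inn_add_left w u v)
    (fun s u v => inn_smul_left s v u)
    (fun u v w => inn_add_right u v w) (fun s u v => inn_smul_right s u v)

lemma B_apply {k} (u v : Fin k → ZMod 2) : B k u v = inn u v := by
  simp [B, LinearMap.mk₂_apply]

lemma B_nondegenerate (k : ℕ) : (B k).Nondegenerate := by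
  refine ⟨fun v hv => ?_, fun v hv => ?_⟩
  · funext i
    have := hv (Pi.single i 1)
    rw [B_apply, inn_comm, inn_single] at this
    simpa using this
  · funext i
    have := hv (Pi.single i 1)
    rw [B_apply, inn_single] at this
    simpa using this

lemma B_refl (k : ℕ) : (B k).IsRefl := by
  intro u v h
  rw [B_apply] at h
  rw [B_apply, inn_comm]
  exact h

lemma selfdual_finrank_le {m : ℕ} (C0 : Submodule (ZMod 2) (Fin (2*m) → ZMod 2))
    (h : IsSelfDual C0) : Module.finrank (ZMod 2) C0 ≤ m := by
  have horth : (B (2*m)).orthogonal C0 = C0 := by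
    ext v
    rw [LinearMap.BilinForm.mem_orthogonal_iff, h v]
    constructor
    · intro hv c hc
      have := hv c hc
      rwa [B_apply, inn_comm] at this
    · intro hv c hc
      rw [B_apply, inn_comm]
      exact hv c hc
  have hfr := LinearMap.BilinForm.finrank_orthogonal (B_nondegenerate (2*m)) C0
  rw [horth, Module.finrank_fin_fun] at hfr
  have hle : Module.finrank (ZMod 2) C0 ≤ 2*m := by
    have := Submodule.finrank_le C0
    rwa [Module.finrank_fin_fun] at this
  omega

end BU

open BU in
theorem stmt_6 (m : ℕ)
    (C : Submodule (ZMod 2) (Fin (2*m+2) → ZMod 2))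
    (hsd : IsSelfDual C) (hmin : ∀ c ∈ C, c ≠ 0 → 3 ≤ wt c) :
    ∃ C0 : Submodule (ZMod 2) (Fin (2*m) → ZMod 2), IsSelfDual C0 ∧
    ∃ r : Fin m → Fin (2*m) → ZMod 2, Submodule.span (ZMod 2) (Set.range r) = C0 ∧
    ∃ x : Fin (2*m) → ZMod 2, wt x % 2 = 1 ∧
    ∃ σ : Equiv.Perm (Fin (2*m+2)),
      (fun (c : Fin (2*m+2) → ZMod 2) => c ∘ σ) '' (C : Set (Fin (2*m+2) → ZMod 2)) =
        ↑(Submodule.span (ZMod 2)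
          (insert (vcons2 1 0 x)
            (Set.range fun i => vcons2 (inn x (r i)) (inn x (r i)) (r i)))) := by
  classical
  -- `C` is nonzero
  have hCne : ∃ z ∈ C, z ≠ 0 := by
    by_contra h
    push_neg at h
    have hone : (fun _ => 1 : Fin (2*m+2) → ZMod 2) ∈ C := by
      rw [hsd]
      intro c hc
      rw [h c hc, inn_zero_right]
    have := h _ hone
    have h0 := congrFun this 0
    simp at h0
  -- find a codeword that is neither 0 nor all-ones
  have hzex : ∃ z ∈ C, z ≠ 0 ∧ z ≠ (fun _ => 1) := by
    by_contra h
    push_neg at h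
    -- then `e₀ + e₁ ∈ C`, a word of weight 2
    have h01 : (0 : Fin (2*m+2)) ≠ 1 := by
      intro hh
      have := congrArg Fin.val hh
      simp at this
    set v : Fin (2*m+2) → ZMod 2 := Pi.single 0 1 + Pi.single 1 1 with hv
    have hvC : v ∈ C := by
      rw [hsd]
      intro c hc
      by_cases hc0 : c = 0
      · rw [hc0, inn_zero_right]
      · rw [h c hc hc0, hv, inn_add_left, inn_single, inn_single]
        decide
    have hv0 : v ≠ 0 := by
      intro hh
      have := congrFun hh 0
      simp [hv, Pi.single_apply, h01] at this
    have hwt : wt v ≤ 2 := by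
      have hsub : Finset.univ.filter (fun i => v i ≠ 0) ⊆ {0, 1} := by
        intro i hi
        simp only [Finset.mem_filter, Finset.mem_univ, true_and] at hi
        by_contra hmem
        simp only [Finset.mem_insert, Finset.mem_singleton] at hmem
        push_neg at hmem
        exact hi (by simp [hv, Pi.single_apply, hmem.1, hmem.2])
      calc wt v ≤ ({0, 1} : Finset (Fin (2*m+2))).card := Finset.card_le_card hsub
        _ ≤ 2 := (Finset.card_insert_le _ _).trans (by simp)
    have := hmin v hvC hv0
    omega
  obtain ⟨z, hzC, hz0, hz1⟩ := hzex
  -- coordinates where z is 1 resp. 0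
  obtain ⟨a, ha⟩ : ∃ a, z a ≠ 0 := by
    by_contra h; push_neg at h; exact hz0 (funext fun i => h i)
  obtain ⟨b, hb⟩ : ∃ b, z b ≠ 1 := by
    by_contra h; push_neg at h; exact hz1 (funext fun i => h i)
  have hza : z a = 1 := (zmod2_cases (z a)).resolve_left ha
  have hzb : z b = 0 := (zmod2_cases (z b)).resolve_right hb
  have hab : a ≠ b := fun h => hb (h ▸ hza)
  have h01 : (0 : Fin (2*m+2)) ≠ 1 := by
    intro hh
    have := congrArg Fin.val hh
    simp at this
  -- the permutation
  set τ : Equiv.Perm (Fin (2*m+2)) := Equiv.swap 0 a with hτ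
  have hb'0 : τ b ≠ 0 := by
    intro h
    have : b = τ 0 := by
      have := congrArg τ h
      rwa [Equiv.swap_apply_self] at this
    rw [hτ, Equiv.swap_apply_left] at this
    exact hab this.symm
  set σ : Equiv.Perm (Fin (2*m+2)) := (Equiv.swap 1 (τ b)).trans τ with hσ
  have hσ0 : σ 0 = a := by
    rw [hσ]
    simp only [Equiv.trans_apply]
    rw [Equiv.swap_apply_of_ne_of_ne h01 (Ne.symm hb'0), hτ, Equiv.swap_apply_left]
  have hσ1 : σ 1 = b := by
    rw [hσ]
    simp only [Equiv.trans_apply]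
    rw [Equiv.swap_apply_left, hτ, Equiv.swap_apply_self]
  -- the permuted code
  set f : (Fin (2*m+2) → ZMod 2) →ₗ[ZMod 2] (Fin (2*m+2) → ZMod 2) :=
    LinearMap.funLeft (ZMod 2) (ZMod 2) σ with hf
  set D : Submodule (ZMod 2) (Fin (2*m+2) → ZMod 2) := Submodule.map f C with hD
  have hfapp : ∀ v : Fin (2*m+2) → ZMod 2, f v = v ∘ σ := fun v => rfl
  have hmemD : ∀ v, v ∈ D ↔ ∃ u ∈ C, u ∘ σ = v := by
    intro v
    rw [hD]
    simp only [Submodule.mem_map]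
    constructor
    · rintro ⟨u, hu, rfl⟩; exact ⟨u, hu, rfl⟩
    · rintro ⟨u, hu, rfl⟩; exact ⟨u, hu, rfl⟩
  have hDsd : IsSelfDual D := by
    intro v
    constructor
    · intro hv c hc
      obtain ⟨u, hu, rfl⟩ := (hmemD v).1 hv
      obtain ⟨w, hw, rfl⟩ := (hmemD c).1 hc
      rw [inn_comp]
      exact (hsd u).1 hu w hw
    · intro hv
      have huC : (v ∘ ⇑σ⁻¹) ∈ C := by
        rw [hsd]
        intro w hw
        have hws : (w ∘ ⇑σ) ∈ D := (hmemD _).2 ⟨w, hw, rfl⟩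
        have hcomp : (v ∘ ⇑σ⁻¹) ∘ ⇑σ = v := funext fun i => congrArg v (σ.symm_apply_apply i)
        rw [← inn_comp (v ∘ ⇑σ⁻¹) w σ, hcomp]
        exact hv _ hws
      refine (hmemD v).2 ⟨v ∘ ⇑σ⁻¹, huC, funext fun i => congrArg v (σ.symm_apply_apply i)⟩
  -- all weights in D are even
  have hEven : ∀ c ∈ D, (wt c : ZMod 2) = 0 := by
    intro c hc
    rw [← inn_self]
    exact (hDsd c).1 hc c hc
  -- z' ∈ D with z' 0 = 1, z' 1 = 0
  set z' : Fin (2*m+2) → ZMod 2 := z ∘ σ with hz'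
  have hz'D : z' ∈ D := (hmemD _).2 ⟨z, hzC, rfl⟩
  have hz'0 : z' 0 = 1 := by rw [hz']; simp [hσ0, hza]
  have hz'1 : z' 1 = 0 := by rw [hz']; simp [hσ1, hzb]
  set x : Fin (2*m) → ZMod 2 := fun i => z' i.succ.succ with hx
  have hxeta : vcons2 1 0 x = z' := by
    rw [← hz'0, ← hz'1]; exact vcons2_eta z'
  -- wt x is odd
  have hxodd : wt x % 2 = 1 := by
    have h1 : wt z' = 1 + (0 + wt x) := by
      rw [← hxeta, wt_vcons2]; norm_num
    have h2 := hEven z' hz'D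
    rw [h1] at h2
    have h3 : (2 : ℕ) ∣ 1 + (0 + wt x) := by
      rwa [ZMod.natCast_eq_zero_iff] at h2
    omega
  -- the lifting map L
  set L : (Fin (2*m) → ZMod 2) →ₗ[ZMod 2] (Fin (2*m+2) → ZMod 2) :=
    { toFun := fun v => vcons2 (inn x v) (inn x v) v
      map_add' := by
        intro u v
        show vcons2 (inn x (u + v)) (inn x (u + v)) (u + v) = _
        rw [vcons2_add, inn_add_right]
      map_smul' := by
        intro s v
        rcases zmod2_cases s with h | h
        · subst h
          simp only [zero_smul, RingHom.id_apply]
          rw [inn_zero_right, vcons2_zero]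
        · subst h
          simp only [one_smul, RingHom.id_apply] } with hL
  have hLapp : ∀ v, L v = vcons2 (inn x v) (inn x v) v := fun v => rfl
  set C0 : Submodule (ZMod 2) (Fin (2*m) → ZMod 2) := Submodule.comap L D with hC0
  -- key: codewords of D with equal first two coordinates are of the form L t
  have hkey : ∀ c ∈ D, c 0 = c 1 → c = L (fun i => c i.succ.succ) ∧
      (fun i => c i.succ.succ) ∈ C0 := by
    intro c hc hcc
    have h1 : inn z' c = 0 := (hDsd z').1 hz'D c hc
    have hceta : vcons2 (c 0) (c 1) (fun i => c i.succ.succ) = c := vcons2_eta c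
    rw [← hceta, ← hxeta, inn_vcons2] at h1
    simp only [one_mul, zero_mul, zero_add] at h1
    have h2 : c 0 = inn x (fun i => c i.succ.succ) := char2_eq h1
    have h3 : c = L (fun i => c i.succ.succ) := by
      rw [hLapp, ← h2]
      nth_rewrite 2 [hcc]
      rw [hceta]
    refine ⟨h3, ?_⟩
    rw [hC0, Submodule.mem_comap, ← h3]
    exact hc
  -- inner product of two lifted vectors
  have hinnL : ∀ u v, inn (L u) (L v) = inn u v := by
    intro u v
    rw [hLapp, hLapp, inn_vcons2, ← add_assoc, add_self, zero_add]
  -- L v is orthogonal to z'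
  have hinnLz : ∀ v, inn (L v) z' = 0 := by
    intro v
    rw [hLapp, ← hxeta, inn_vcons2]
    simp only [mul_one, mul_zero, zero_add]
    rw [inn_comm x v]
    exact add_self _
  -- C0 is self-dual
  have hC0sd : IsSelfDual C0 := by
    intro v
    constructor
    · intro hv w hw
      have := (hDsd (L v)).1 hv (L w) hw
      rwa [hinnL] at this
    · intro hv
      rw [hC0, Submodule.mem_comap]
      rw [hDsd]
      intro c hc
      set s : ZMod 2 := c 0 + c 1 with hs
      have hcz : c + s • z' ∈ D := Submodule.add_mem D hc (Submodule.smul_mem D s hz'D)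
      have hcc : (c + s • z') 0 = (c + s • z') 1 := by
        simp only [Pi.add_apply, Pi.smul_apply, smul_eq_mul, hz'0, hz'1, mul_one, mul_zero,
          add_zero, hs]
        have : ∀ a b : ZMod 2, a + (a + b) = b := by decide
        exact this _ _
      obtain ⟨hLc, htc⟩ := hkey _ hcz hcc
      have h2 : inn (L v) (c + s • z') = 0 := by
        rw [hLc, hinnL]
        exact hv _ htc
      rw [inn_add_right, inn_smul_right, hinnLz, mul_zero, add_zero] at h2
      exact h2
  -- a spanning family of size m for C0
  have hfr : Module.finrank (ZMod 2) C0 ≤ m := selfdual_finrank_le C0 hC0sd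
  have : Module.Finite (ZMod 2) C0 := by
    infer_instance
  set bb : Module.Basis (Fin (Module.finrank (ZMod 2) C0)) (ZMod 2) C0 :=
    Module.finBasis (ZMod 2) C0 with hbb
  set r : Fin m → Fin (2*m) → ZMod 2 := fun i =>
    if h : (i : ℕ) < Module.finrank (ZMod 2) C0 then (bb ⟨i, h⟩ : Fin (2*m) → ZMod 2) else 0
    with hr
  have hrC0 : ∀ i, r i ∈ C0 := by
    intro i
    by_cases h : (i : ℕ) < Module.finrank (ZMod 2) C0
    · simp only [hr]
      rw [dif_pos h]
      exact (bb ⟨i, h⟩).2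
    · simp only [hr]
      rw [dif_neg h]
      exact Submodule.zero_mem C0
  have hspan : Submodule.span (ZMod 2) (Set.range r) = C0 := by
    apply le_antisymm
    · rw [Submodule.span_le]
      rintro w ⟨i, rfl⟩
      exact hrC0 i
    · intro w hw
      have h1 : (⟨w, hw⟩ : C0) ∈ Submodule.span (ZMod 2) (Set.range ⇑bb) := by
        rw [Module.Basis.span_eq]; trivial
      have h2 : w ∈ Submodule.map C0.subtype (Submodule.span (ZMod 2) (Set.range ⇑bb)) :=
        ⟨⟨w, hw⟩, h1, rfl⟩
      rw [Submodule.map_span] at h2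
      refine Submodule.span_mono ?_ h2
      rintro u ⟨-, ⟨j, rfl⟩, rfl⟩
      have hjm : (j : ℕ) < m := lt_of_lt_of_le j.2 hfr
      refine ⟨⟨j, hjm⟩, ?_⟩
      have hj' : ((⟨(j : ℕ), hjm⟩ : Fin m) : ℕ) < Module.finrank (ZMod 2) C0 := j.2
      simp only [hr]
      rw [dif_pos hj']
      simp
  -- the span equality
  have hgen : ∀ i, vcons2 (inn x (r i)) (inn x (r i)) (r i) = L (r i) := fun i => rfl
  have hspanD : D = Submodule.span (ZMod 2)
      (insert (vcons2 1 0 x)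
        (Set.range fun i => vcons2 (inn x (r i)) (inn x (r i)) (r i))) := by
    apply le_antisymm
    · intro c hc
      set s : ZMod 2 := c 0 + c 1 with hs
      have hcz : c + s • z' ∈ D := Submodule.add_mem D hc (Submodule.smul_mem D s hz'D)
      have hcc : (c + s • z') 0 = (c + s • z') 1 := by
        simp only [Pi.add_apply, Pi.smul_apply, smul_eq_mul, hz'0, hz'1, mul_one, mul_zero,
          add_zero, hs]
        have : ∀ a b : ZMod 2, a + (a + b) = b := by decide
        exact this _ _
      obtain ⟨hLc, htc⟩ := hkey _ hcz hcc
      have ht' : (fun i => (c + s • z') i.succ.succ) ∈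
          Submodule.span (ZMod 2) (Set.range r) := by
        rw [hspan]; exact htc
      have hLmem : c + s • z' ∈ Submodule.span (ZMod 2)
          (Set.range fun i => vcons2 (inn x (r i)) (inn x (r i)) (r i)) := by
        rw [hLc]
        have : L (fun i => (c + s • z') i.succ.succ) ∈
            Submodule.map L (Submodule.span (ZMod 2) (Set.range r)) :=
          Submodule.mem_map_of_mem ht'
        rw [Submodule.map_span] at this
        refine Submodule.span_mono ?_ this
        rintro u ⟨-, ⟨j, rfl⟩, rfl⟩
        exact ⟨j, (hgen j).symm⟩
      have hzmem : vcons2 1 0 x ∈ Submodule.span (ZMod 2)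
          (insert (vcons2 1 0 x)
            (Set.range fun i => vcons2 (inn x (r i)) (inn x (r i)) (r i))) :=
        Submodule.subset_span (Set.mem_insert _ _)
      have hceq : c = (c + s • z') + s • (vcons2 1 0 x) := by
        rw [hxeta, add_assoc, ← add_smul, add_self, zero_smul, add_zero]
      rw [hceq]
      exact Submodule.add_mem _
        (Submodule.span_mono (Set.subset_insert _ _) hLmem)
        (Submodule.smul_mem _ s hzmem)
    · rw [Submodule.span_le]
      rintro w hw
      rcases hw with rfl | ⟨i, rfl⟩
      · rw [hxeta]; exact hz'D
      · show vcons2 (inn x (r i)) (inn x (r i)) (r i) ∈ D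
        rw [hgen]
        exact Submodule.mem_comap.mp (hrC0 i)
  -- assemble
  refine ⟨C0, hC0sd, r, hspan, x, hxodd, σ, ?_⟩
  have himg : (fun (c : Fin (2*m+2) → ZMod 2) => c ∘ ⇑σ) '' (C : Set (Fin (2*m+2) → ZMod 2)) =
      (D : Set (Fin (2*m+2) → ZMod 2)) := by
    rw [hD, Submodule.map_coe]
    rfl
  rw [himg, hspanD]
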